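/- Let F ⊆ P_{a1⊕a2}(X1×X2) be a totally C-cyclically monotone set. Then the set of marginal pairs (pr¹_♯, pr²_♯)(F) ⊆ P_{a1}(X1) × P_{a2}(X2) is C-cyclically monotone, i.e. for all k ≥ 1, all permutations σ of {1,…,k}, and all pairs (μ_{1,i},μ_{2,i}) ∈ (pr¹_♯, pr²_♯)(F), one has Σ_{i=1}^k C(μ_{1,i},μ_{2,σ(i)}) ≥ Σ_{i=1}^k C(μ_{1,i},μ_{2,i}). -/

import Mathlib

open MeasureTheory Topology ENNReal Set

noncomputable section

namespace OTRM

noncomputable instance instMSPM {X : Type*} [MeasurableSpace X] [TopologicalSpace X]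
    [OpensMeasurableSpace X] : MeasurableSpace (ProbabilityMeasure X) := borel _

instance instBSPM {X : Type*} [MeasurableSpace X] [TopologicalSpace X]
    [OpensMeasurableSpace X] : BorelSpace (ProbabilityMeasure X) := ⟨rfl⟩

variable {X1 X2 : Type*}
  [MeasurableSpace X1] [TopologicalSpace X1] [BorelSpace X1] [PolishSpace X1]
  [MeasurableSpace X2] [TopologicalSpace X2] [BorelSpace X2] [PolishSpace X2]

def Coupling {Y1 Y2 : Type*} [MeasurableSpace Y1] [MeasurableSpace Y2]
    (μ1 : ProbabilityMeasure Y1) (μ2 : ProbabilityMeasure Y2) :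
    Set (ProbabilityMeasure (Y1 × Y2)) :=
  {π | (π : Measure (Y1 × Y2)).map Prod.fst = (μ1 : Measure Y1) ∧
       (π : Measure (Y1 × Y2)).map Prod.snd = (μ2 : Measure Y2)}

def transportCost (c : X1 × X2 → ℝ≥0∞) (π : ProbabilityMeasure (X1 × X2)) : ℝ≥0∞ :=
  ∫⁻ p, c p ∂(π : Measure (X1 × X2))

def OTCost (c : X1 × X2 → ℝ≥0∞) (μ1 : ProbabilityMeasure X1) (μ2 : ProbabilityMeasure X2) :
    ℝ≥0∞ :=
  ⨅ π ∈ Coupling μ1 μ2, transportCost c π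

/-- First marginal of a transport plan. -/
def margFst (π : ProbabilityMeasure (X1 × X2)) : ProbabilityMeasure X1 :=
  π.map measurable_fst.aemeasurable

/-- Second marginal of a transport plan. -/
def margSnd (π : ProbabilityMeasure (X1 × X2)) : ProbabilityMeasure X2 :=
  π.map measurable_snd.aemeasurable

/-- The iterated optimal transport cost `𝒞(M1, M2)` between laws of random measures. -/
def IterOTCost (c : X1 × X2 → ℝ≥0∞)
    (M1 : ProbabilityMeasure (ProbabilityMeasure X1))
    (M2 : ProbabilityMeasure (ProbabilityMeasure X2)) : ℝ≥0∞ :=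
  ⨅ P ∈ Coupling M1 M2,
    ∫⁻ p, OTCost c p.1 p.2 ∂(P : Measure (ProbabilityMeasure X1 × ProbabilityMeasure X2))

/-- The set of (laws of) random couplings between `M1` and `M2`. -/
def RandCoupling (M1 : ProbabilityMeasure (ProbabilityMeasure X1))
    (M2 : ProbabilityMeasure (ProbabilityMeasure X2)) :
    Set (ProbabilityMeasure (ProbabilityMeasure (X1 × X2))) :=
  {P | (P : Measure (ProbabilityMeasure (X1 × X2))).map margFst
          = (M1 : Measure (ProbabilityMeasure X1)) ∧
       (P : Measure (ProbabilityMeasure (X1 × X2))).map margSnd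
          = (M2 : Measure (ProbabilityMeasure X2))}


/-- The pair-marginal pushforward `(pr¹_♯, pr²_♯)_♯ P` of a random coupling. -/
def margPairLaw (P : ProbabilityMeasure (ProbabilityMeasure (X1 × X2))) :
    Measure (ProbabilityMeasure X1 × ProbabilityMeasure X2) :=
  (P : Measure (ProbabilityMeasure (X1 × X2))).map fun π => (margFst π, margSnd π)

/-- The set of `c`-optimal couplings (between their own marginals). -/
def OptPlans (c : X1 × X2 → ℝ≥0∞) : Set (ProbabilityMeasure (X1 × X2)) :=
  {π | transportCost c π = OTCost c (margFst π) (margSnd π)}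

/-- Probability measures with finite `a`-moment: `P_a(X)`. -/
def Pa {X : Type*} [MeasurableSpace X] (a : X → ℝ≥0∞) : Set (ProbabilityMeasure X) :=
  {μ | (∫⁻ x, a x ∂(μ : Measure X)) ≠ ⊤}

/-- Plans both of whose marginals have finite moments: `P_{a1 ⊕ a2}(X1 × X2)`. -/
def PaPair (a1 : X1 → ℝ≥0∞) (a2 : X2 → ℝ≥0∞) : Set (ProbabilityMeasure (X1 × X2)) :=
  {π | margFst π ∈ Pa a1 ∧ margSnd π ∈ Pa a2}

section Kframework

variable {Y1 Y2 : Type*}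

/-- `K`-concavity of `φ` relative to the domains `D1`, `D2` (Definition 2.2(2)):
`φ` is not identically `-∞` on `D1` and is, on `D1`, an infimum of functions
`y1 ↦ K(y1,y2) - α` with `y2 ∈ D2`, `α ∈ ℝ`. -/
def KConcaveOn (K : Y1 → Y2 → ℝ≥0∞) (D1 : Set Y1) (D2 : Set Y2) (φ : Y1 → EReal) : Prop :=
  (∃ y1 ∈ D1, φ y1 ≠ ⊥) ∧
    ∃ A : Set (Y2 × ℝ), (∀ p ∈ A, p.1 ∈ D2) ∧
      ∀ y1 ∈ D1, φ y1 = ⨅ p ∈ A, ((K y1 p.1 : EReal) - (p.2 : EReal))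

/-- The `K`-transform of `φ` (Definition 2.2(3)). -/
def KTransform (K : Y1 → Y2 → ℝ≥0∞) (D1 : Set Y1) (φ : Y1 → EReal) : Y2 → EReal :=
  fun y2 => ⨅ y1 ∈ D1, ((K y1 y2 : EReal) - φ y1)

/-- The `K`-superdifferential of `φ` (Definition 2.2(4)). -/
def KSuperdiff (K : Y1 → Y2 → ℝ≥0∞) (D1 : Set Y1) (D2 : Set Y2) (φ : Y1 → EReal) :
    Set (Y1 × Y2) :=
  {p | p.1 ∈ D1 ∧ p.2 ∈ D2 ∧ φ p.1 ≠ ⊥ ∧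
    ∀ y1' ∈ D1, ((K p.1 p.2 : EReal) - φ p.1) ≤ ((K y1' p.2 : EReal) - φ y1')}

/-- `K`-cyclical monotonicity of a set of pairs (Definition 2.2(1)). -/
def KCyclMono (K : Y1 → Y2 → ℝ≥0∞) (G : Set (Y1 × Y2)) : Prop :=
  ∀ (k : ℕ), 1 ≤ k → ∀ f : Fin k → Y1 × Y2, (∀ i, f i ∈ G) →
    ∀ σ : Equiv.Perm (Fin k), (∑ i, K (f i).1 (f i).2) ≤ ∑ i, K (f i).1 (f (σ i)).2

end Kframework

/-- First marginal of a measure on `X1 × X2 × X1`. -/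
def margFirst3 (θ : ProbabilityMeasure (X1 × X2 × X1)) : ProbabilityMeasure X1 :=
  θ.map measurable_fst.aemeasurable

/-- Third marginal of a measure on `X1 × X2 × X1`. -/
def margThird3 (θ : ProbabilityMeasure (X1 × X2 × X1)) : ProbabilityMeasure X1 :=
  θ.map (measurable_snd.comp measurable_snd).aemeasurable

/-- The total `C`-superdifferential of `φ` (Definition 3.4). -/
def TotalSuperdiff (c : X1 × X2 → ℝ≥0∞) (a1 : X1 → ℝ≥0∞) (a2 : X2 → ℝ≥0∞)
    (φ : ProbabilityMeasure X1 → EReal) : Set (ProbabilityMeasure (X1 × X2)) :=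
  {π | π ∈ PaPair a1 a2 ∧
    ∀ θ : ProbabilityMeasure (X1 × X2 × X1),
      (θ : Measure (X1 × X2 × X1)).map (fun p => (p.1, p.2.1)) = (π : Measure (X1 × X2)) →
      margThird3 θ ∈ Pa a1 →
      ((∫⁻ p, c (p.1, p.2.1) ∂(θ : Measure (X1 × X2 × X1)) : ℝ≥0∞) : EReal)
          - ((∫⁻ p, c (p.2.2, p.2.1) ∂(θ : Measure (X1 × X2 × X1)) : ℝ≥0∞) : EReal)
        ≤ φ (margFirst3 θ) - φ (margThird3 θ)}

/-- Total `C`-cyclical monotonicity of a set of plans (Definition 3.5). -/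
def TotallyCCyclMono (c : X1 × X2 → ℝ≥0∞) (F : Set (ProbabilityMeasure (X1 × X2))) : Prop :=
  ∀ (N : ℕ), 1 ≤ N → ∀ θ : ProbabilityMeasure (Fin N → X1 × X2),
    (∀ n : Fin N, θ.map (measurable_pi_apply n).aemeasurable ∈ F) →
    ∀ σ : Equiv.Perm (Fin N),
      (∫⁻ ω, ∑ i, c (ω i) ∂(θ : Measure (Fin N → X1 × X2)))
        ≤ ∫⁻ ω, ∑ i, c ((ω i).1, (ω (σ i)).2) ∂(θ : Measure (Fin N → X1 × X2))



section ChainAux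
open ProbabilityTheory

set_option linter.unusedSectionVars false
set_option linter.unusedVariables false


/-- The lex equivalence `Fin (N+1) ≃ Fin m × Fin k`, `n ↦ (n % m, n / m)`. -/
def blockEquiv {k m N : ℕ} (hk : 0 < k) (hm : 0 < m) (hN : N + 1 = k * m) :
    Fin (N + 1) ≃ Fin m × Fin k where
  toFun n := (⟨n.1 % m, Nat.mod_lt _ hm⟩,
    ⟨n.1 / m, by rw [Nat.div_lt_iff_lt_mul hm]; have := n.2; omega⟩)
  invFun q := ⟨q.2.1 * m + q.1.1, by
    have h1 := q.1.2
    have h2 := q.2.2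
    have h4 : q.2.1 * m + q.1.1 < q.2.1 * m + m := by omega
    have h5 : q.2.1 * m + m = (q.2.1 + 1) * m := by ring
    have h3 : (q.2.1 + 1) * m ≤ k * m := Nat.mul_le_mul_right m h2
    omega⟩
  left_inv n := by
    ext
    simp only
    exact Nat.div_add_mod' n.1 m
  right_inv q := by
    ext
    · simp only
      rw [Nat.mul_comm, Nat.mul_add_mod]
      exact Nat.mod_eq_of_lt q.1.2
    · simp only
      rw [Nat.mul_comm, Nat.mul_add_div hm, Nat.div_eq_of_lt q.1.2]
      simp

lemma blockEquiv_apply {k m N : ℕ} (hk : 0 < k) (hm : 0 < m) (hN : N + 1 = k * m)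
    (n : Fin (N + 1)) :
    blockEquiv hk hm hN n = (⟨n.1 % m, Nat.mod_lt _ hm⟩,
      ⟨n.1 / m, by rw [Nat.div_lt_iff_lt_mul hm]; have := n.2; omega⟩) := rfl

lemma blockEquiv_symm_val {k m N : ℕ} (hk : 0 < k) (hm : 0 < m) (hN : N + 1 = k * m)
    (q : Fin m × Fin k) :
    (((blockEquiv hk hm hN).symm q : Fin (N + 1)) : ℕ) = q.2.1 * m + q.1.1 := rfl

lemma mod_div_succ {m j : ℕ} (hm : 0 < m) (h : j % m ≠ m - 1) :
    (j + 1) % m = j % m + 1 ∧ (j + 1) / m = j / m := by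
  have hd : m * (j / m) + j % m = j := Nat.div_add_mod j m
  have hr : j % m < m := Nat.mod_lt _ hm
  have hr1 : j % m + 1 < m := by omega
  constructor
  · have : j + 1 = m * (j / m) + (j % m + 1) := by omega
    rw [this, Nat.mul_add_mod]
    exact Nat.mod_eq_of_lt hr1
  · have : j + 1 = m * (j / m) + (j % m + 1) := by omega
    rw [this, Nat.mul_add_div hm, Nat.div_eq_of_lt hr1]
    simp

/-- The block-rotation permutation. -/
def blockPerm {k m N : ℕ} (hk : 0 < k) (hm : 0 < m) (hN : N + 1 = k * m) :
    Equiv.Perm (Fin (N + 1)) :=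
  (blockEquiv hk hm hN).symm.permCongr
    (Equiv.prodCongr (finRotate m) (Equiv.refl (Fin k)))

lemma good_lt {k m N : ℕ} (hk : 0 < k) (hm : 0 < m) (hN : N + 1 = k * m)
    (n : Fin (N + 1)) (h : (n : ℕ) % m ≠ m - 1) : (n : ℕ) + 1 < N + 1 := by
  have hr : (n : ℕ) % m < m := Nat.mod_lt _ hm
  have hd : m * ((n : ℕ) / m) + (n : ℕ) % m = (n : ℕ) := Nat.div_add_mod _ m
  have hdiv : (n : ℕ) / m < k := by rw [Nat.div_lt_iff_lt_mul hm]; have := n.2; omega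
  have h2 : m * ((n : ℕ) / m) + m = m * ((n : ℕ) / m + 1) := by ring
  have h3 : m * ((n : ℕ) / m + 1) ≤ m * k := Nat.mul_le_mul_left m hdiv
  have h4 : m * k = k * m := Nat.mul_comm m k
  omega

lemma blockPerm_good {k m N : ℕ} (hk : 0 < k) (hm : 0 < m) (hN : N + 1 = k * m)
    (n : Fin (N + 1)) (h : (n : ℕ) % m ≠ m - 1) :
    blockPerm hk hm hN n = ⟨(n : ℕ) + 1, good_lt hk hm hN n h⟩ := by
  have hr : (n : ℕ) % m < m := Nat.mod_lt _ hm
  obtain ⟨m', rfl⟩ : ∃ m', m = m' + 1 := ⟨m - 1, by omega⟩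
  apply Fin.ext
  rw [blockPerm, Equiv.permCongr_apply, Equiv.symm_symm, blockEquiv_apply hk hm hN,
    Equiv.prodCongr_apply]
  have hlt : (⟨(n : ℕ) % (m' + 1), Nat.mod_lt _ hm⟩ : Fin (m' + 1)) < Fin.last m' := by
    rw [Fin.lt_iff_val_lt_val, Fin.val_last]
    simp only
    omega
  rw [Prod.map]
  simp only [Equiv.refl_apply]
  rw [finRotate_succ_apply, blockEquiv_symm_val]
  simp only
  rw [Fin.val_add_one_of_lt hlt]
  simp only
  have := Nat.div_add_mod' (n : ℕ) (m' + 1)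
  omega


variable {A B : Type*} [MeasurableSpace A] [MeasurableSpace B]
  [StandardBorelSpace A] [StandardBorelSpace B] [Nonempty A] [Nonempty B]

variable {A B : Type*} [MeasurableSpace A] [MeasurableSpace B]
  [StandardBorelSpace A] [StandardBorelSpace B] [Nonempty A] [Nonempty B]

def stepK (γ ρ' : Measure (A × B)) [IsFiniteMeasure γ] [IsFiniteMeasure ρ'] :
    Kernel A (A × B) :=
  (((ρ'.map Prod.swap).condKernel ×ₖ Kernel.id) ∘ₖ γ.condKernel)

instance stepK_markov (γ ρ' : Measure (A × B)) [IsFiniteMeasure γ] [IsFiniteMeasure ρ'] :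
    IsMarkovKernel (stepK γ ρ') := by
  unfold stepK
  have : IsFiniteMeasure (ρ'.map Prod.swap) := Measure.isFiniteMeasure_map ρ' Prod.swap
  infer_instance

lemma stepK_slice (γ ρ' : Measure (A × B)) [IsFiniteMeasure γ] [IsFiniteMeasure ρ']
    {s : Set (A × B)} (hs : MeasurableSet s) (x : A) :
    stepK γ ρ' x {z : A × B | (x, z.2) ∈ s} = γ.condKernel x {b | (x, b) ∈ s} := by
  have : IsFiniteMeasure (ρ'.map Prod.swap) := Measure.isFiniteMeasure_map ρ' Prod.swap
  have hs2 : MeasurableSet {z : A × B | (x, z.2) ∈ s} :=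
    (measurable_const.prodMk measurable_snd) hs
  have hsb : MeasurableSet {b : B | (x, b) ∈ s} := measurable_prodMk_left hs
  rw [stepK, Kernel.comp_apply, Measure.bind_apply hs2 (Kernel.measurable _).aemeasurable]
  have hpt : ∀ b : B,
      ((ρ'.map Prod.swap).condKernel ×ₖ Kernel.id) b {z : A × B | (x, z.2) ∈ s}
        = {b : B | (x, b) ∈ s}.indicator 1 b := by
    intro b
    rw [Kernel.prod_apply, Kernel.id_apply, Measure.prod_apply hs2]
    have : ∀ a : A, (Measure.dirac b) (Prod.mk a ⁻¹' {z : A × B | (x, z.2) ∈ s})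
        = {b : B | (x, b) ∈ s}.indicator 1 b := by
      intro a
      have : Prod.mk a ⁻¹' {z : A × B | (x, z.2) ∈ s} = {b : B | (x, b) ∈ s} := rfl
      rw [this, Measure.dirac_apply' _ hsb]
    simp_rw [this]
    rw [lintegral_const]
    simp
  simp_rw [hpt]
  rw [lintegral_indicator_one hsb]

lemma stepK_apply (γ ρ' : Measure (A × B)) [IsFiniteMeasure γ] [IsFiniteMeasure ρ']
    {s : Set (A × B)} (hs : MeasurableSet s) (x : A) :
    stepK γ ρ' x s
      = ∫⁻ b, (ρ'.map Prod.swap).condKernel b {a : A | (a, b) ∈ s} ∂(γ.condKernel x) := by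
  have : IsFiniteMeasure (ρ'.map Prod.swap) := Measure.isFiniteMeasure_map ρ' Prod.swap
  rw [stepK, Kernel.comp_apply, Measure.bind_apply hs (Kernel.measurable _).aemeasurable]
  congr 1
  funext b
  rw [Kernel.prod_apply, Kernel.id_apply, Measure.prod_apply hs]
  have hpt : ∀ a : A, (Measure.dirac b) (Prod.mk a ⁻¹' s)
      = ({a : A | (a, b) ∈ s}).indicator 1 a := by
    intro a
    rw [Measure.dirac_apply' _ (measurable_prodMk_left hs)]
    by_cases h : (a, b) ∈ s <;>
      simp [Set.indicator, h]
  simp_rw [hpt]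
  exact lintegral_indicator_one (measurable_prodMk_right hs)

section Ext

variable {W : Type*} [MeasurableSpace W] {Q : Measure W} [IsProbabilityMeasure Q]
  {g : W → A} (hg : Measurable g)
  {γ ρ' : Measure (A × B)} [IsProbabilityMeasure γ] [IsProbabilityMeasure ρ']

/-- The old data is preserved by the extension. -/
lemma ext_fst : (Q ⊗ₘ ((stepK γ ρ').comap g hg)).map Prod.fst = Q := by
  have := Measure.fst_compProd Q ((stepK γ ρ').comap g hg)
  rwa [Measure.fst] at this

/-- Push-forward of the extension by a function of the old variables only. -/
lemma ext_map_fst {V : Type*} [MeasurableSpace V] {F : W → V} (hF : Measurable F) :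
    (Q ⊗ₘ ((stepK γ ρ').comap g hg)).map (fun p => F p.1) = Q.map F := by
  have h := Measure.map_map hF (measurable_fst :
    Measurable (Prod.fst : W × (A × B) → W)) (μ := Q ⊗ₘ ((stepK γ ρ').comap g hg))
  rw [ext_fst] at h
  exact h.symm

/-- Law of the new chunk. -/
lemma ext_snd (hQg : Q.map g = γ.map Prod.fst)
    (hsnd : γ.map Prod.snd = ρ'.map Prod.snd) :
    (Q ⊗ₘ ((stepK γ ρ').comap g hg)).map Prod.snd = ρ' := by
  have hfs : IsFiniteMeasure (ρ'.map Prod.swap) := Measure.isFiniteMeasure_map ρ' Prod.swap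
  ext s hs
  rw [Measure.map_apply measurable_snd hs,
    Measure.compProd_apply (measurable_snd hs)]
  have hpre : ∀ w : W, Prod.mk w ⁻¹' (Prod.snd ⁻¹' s : Set (W × (A × B))) = s := fun _ => rfl
  simp_rw [Kernel.comap_apply, hpre]
  -- ∫⁻ w, stepK γ ρ' (g w) s ∂Q
  rw [← lintegral_map (Kernel.measurable_coe _ hs) hg, hQg]
  -- ∫⁻ x, stepK γ ρ' x s ∂(γ.map Prod.fst)
  have hF : Measurable fun b : B => (ρ'.map Prod.swap).condKernel b {a : A | (a, b) ∈ s} := by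
    have : ∀ b : B, {a : A | (a, b) ∈ s} = Prod.mk b ⁻¹' (Prod.swap ⁻¹' s) := fun _ => rfl
    simp_rw [this]
    exact Kernel.measurable_kernel_prodMk_left (measurable_swap hs)
  calc ∫⁻ x, stepK γ ρ' x s ∂(γ.map Prod.fst)
      = ∫⁻ x, ∫⁻ b, (ρ'.map Prod.swap).condKernel b {a : A | (a, b) ∈ s}
          ∂(γ.condKernel x) ∂(γ.map Prod.fst) := by
        congr 1; funext x; exact stepK_apply γ ρ' hs x
    _ = ∫⁻ p : A × B, (ρ'.map Prod.swap).condKernel p.2 {a : A | (a, p.2) ∈ s} ∂γ := by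
        have hγ : γ.fst ⊗ₘ γ.condKernel = γ := γ.disintegrate γ.condKernel
        have hF2 : Measurable fun p : A × B =>
            (ρ'.map Prod.swap).condKernel p.2 {a : A | (a, p.2) ∈ s} := hF.comp measurable_snd
        conv_rhs => rw [← hγ]
        rw [Measure.lintegral_compProd hF2]
        rfl
    _ = ∫⁻ b, (ρ'.map Prod.swap).condKernel b {a : A | (a, b) ∈ s} ∂(γ.map Prod.snd) := by
        rw [lintegral_map hF measurable_snd]
    _ = ∫⁻ b, (ρ'.map Prod.swap).condKernel b
          (Prod.mk b ⁻¹' (Prod.swap ⁻¹' s)) ∂((ρ'.map Prod.swap).fst) := by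
        rw [hsnd]
        have : (ρ'.map Prod.swap).fst = ρ'.map Prod.snd := by
          rw [Measure.fst, Measure.map_map measurable_fst measurable_swap]
          rfl
        rw [this]
        rfl
    _ = (ρ'.map Prod.swap) (Prod.swap ⁻¹' s) := by
        conv_rhs => rw [← (ρ'.map Prod.swap).disintegrate (ρ'.map Prod.swap).condKernel]
        rw [Measure.compProd_apply (measurable_swap hs)]
    _ = ρ' s := by
        rw [Measure.map_apply measurable_swap (measurable_swap hs)]
        have : Prod.swap ⁻¹' (Prod.swap ⁻¹' s) = s := by ext p; simp
        rw [this]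

/-- Law of the new edge. -/
lemma ext_edge (hQg : Q.map g = γ.map Prod.fst) :
    (Q ⊗ₘ ((stepK γ ρ').comap g hg)).map (fun p => (g p.1, p.2.2)) = γ := by
  ext s hs
  have hmap : Measurable fun p : W × (A × B) => (g p.1, p.2.2) :=
    (hg.comp measurable_fst).prodMk (measurable_snd.comp measurable_snd)
  rw [Measure.map_apply hmap hs, Measure.compProd_apply (hmap hs)]
  have hpre : ∀ w : W,
      Prod.mk w ⁻¹' ((fun p : W × (A × B) => (g p.1, p.2.2)) ⁻¹' s)
        = {z : A × B | (g w, z.2) ∈ s} := fun _ => rfl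
  simp_rw [Kernel.comap_apply, hpre]
  have hGmeas : Measurable fun x : A => γ.condKernel x {b : B | (x, b) ∈ s} := by
    have : ∀ x : A, {b : B | (x, b) ∈ s} = Prod.mk x ⁻¹' s := fun _ => rfl
    simp_rw [this]
    exact Kernel.measurable_kernel_prodMk_left hs
  calc ∫⁻ w, stepK γ ρ' (g w) {z : A × B | (g w, z.2) ∈ s} ∂Q
      = ∫⁻ w, γ.condKernel (g w) {b : B | (g w, b) ∈ s} ∂Q := by
        congr 1; funext w; exact stepK_slice γ ρ' hs (g w)
    _ = ∫⁻ x, γ.condKernel x {b : B | (x, b) ∈ s} ∂(γ.map Prod.fst) := by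
        rw [← lintegral_map hGmeas hg, hQg]
    _ = γ s := by
        conv_rhs => rw [← γ.disintegrate γ.condKernel]
        rw [Measure.compProd_apply hs]
        rfl

end Ext


variable {A B : Type*} [MeasurableSpace A] [MeasurableSpace B]
  [StandardBorelSpace A] [StandardBorelSpace B] [Nonempty A] [Nonempty B]


lemma measurable_snocFun {Z : Type*} [MeasurableSpace Z] {n : ℕ} :
    Measurable (fun q : (Fin (n + 1) → Z) × Z => (Fin.snoc q.1 q.2 : Fin (n + 2) → Z)) := by
  apply measurable_pi_lambda
  intro i
  induction i using Fin.lastCases with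
  | last => simpa [Fin.snoc_last] using measurable_snd
  | cast j => simp only [Fin.snoc_castSucc]; exact (measurable_pi_apply j).comp measurable_fst

def chain (ρ γ : ℕ → ProbabilityMeasure (A × B)) : (n : ℕ) → Measure (Fin (n + 1) → A × B)
  | 0 => (ρ 0 : Measure (A × B)).map (fun z _ => z)
  | n + 1 =>
      ((chain ρ γ n) ⊗ₘ ((stepK (γ n : Measure (A × B)) (ρ (n + 1) : Measure (A × B))).comap
        (fun ω => (ω (Fin.last n)).1) (measurable_fst.comp (measurable_pi_apply _)))).map
        (fun q => Fin.snoc q.1 q.2)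

instance chain_prob (ρ γ : ℕ → ProbabilityMeasure (A × B)) (n : ℕ) :
    IsProbabilityMeasure (chain ρ γ n) := by
  induction n with
  | zero =>
      rw [chain]
      exact Measure.isProbabilityMeasure_map
        (measurable_pi_lambda (fun (z : A × B) (_ : Fin 1) => z)
          (fun _ => measurable_id)).aemeasurable
  | succ n ih =>
      rw [chain]
      haveI : IsProbabilityMeasure ((chain ρ γ n) ⊗ₘ
          ((stepK (γ n : Measure (A × B)) (ρ (n + 1) : Measure (A × B))).comap
            (fun ω => (ω (Fin.last n)).1) (measurable_fst.comp (measurable_pi_apply _)))) :=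
        ⟨by rw [Measure.compProd_apply_univ]; exact measure_univ⟩
      exact Measure.isProbabilityMeasure_map measurable_snocFun.aemeasurable

variable {ρ γ : ℕ → ProbabilityMeasure (A × B)}

lemma chain_eval
    (h1 : ∀ j, (γ j : Measure (A × B)).map Prod.fst = (ρ j : Measure (A × B)).map Prod.fst)
    (h2 : ∀ j, (γ j : Measure (A × B)).map Prod.snd = (ρ (j + 1) : Measure (A × B)).map Prod.snd)
    (n : ℕ) (i : Fin (n + 1)) :
    (chain ρ γ n).map (Function.eval i) = (ρ (i : ℕ) : Measure (A × B)) := by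
  induction n with
  | zero =>
      rw [chain, Measure.map_map (measurable_pi_apply i)
        (measurable_pi_lambda (fun (z : A × B) (_ : Fin 1) => z) (fun _ => measurable_id))]
      have h0 : (i : ℕ) = 0 := by omega
      rw [h0]
      have : (Function.eval i ∘ fun (z : A × B) (_ : Fin 1) => z) = id := rfl
      rw [this, Measure.map_id]
  | succ n ih =>
      rw [chain]
      rw [Measure.map_map (measurable_pi_apply i) measurable_snocFun]
      set Z := A × B
      induction i using Fin.lastCases with
      | last =>
          have hcomp : (Function.eval (Fin.last (n+1)) ∘
              fun q : (Fin (n+1) → Z) × Z => (Fin.snoc q.1 q.2 : Fin (n+2) → Z))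
              = fun q : (Fin (n+1) → Z) × Z => q.2 := by
            funext q; simp [Function.eval, Fin.snoc_last]
          rw [hcomp]
          have hQg : (chain ρ γ n).map (fun ω => (ω (Fin.last n)).1)
              = (γ n : Measure Z).map Prod.fst := by
            have hl := ih (Fin.last n)
            rw [Fin.val_last] at hl
            rw [h1 n, ← hl]
            exact (Measure.map_map measurable_fst (measurable_pi_apply (Fin.last n))).symm
          have := ext_snd (g := fun ω : Fin (n+1) → Z => (ω (Fin.last n)).1)
            (measurable_fst.comp (measurable_pi_apply (Fin.last n))) hQg (h2 n)
          simpa using this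
      | cast j =>
          have hcomp : (Function.eval (Fin.castSucc j) ∘
              fun q : (Fin (n+1) → Z) × Z => (Fin.snoc q.1 q.2 : Fin (n+2) → Z))
              = fun q : (Fin (n+1) → Z) × Z => q.1 j := by
            funext q; simp [Function.eval, Fin.snoc_castSucc]
          rw [hcomp]
          have : ((chain ρ γ n) ⊗ₘ ((stepK (γ n : Measure Z) (ρ (n+1) : Measure Z)).comap
              (fun ω => (ω (Fin.last n)).1)
              (measurable_fst.comp (measurable_pi_apply _)))).map
              (fun q : (Fin (n+1) → Z) × Z => Function.eval j q.1)
              = (chain ρ γ n).map (Function.eval j) :=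
            ext_map_fst (g := fun ω : Fin (n+1) → Z => (ω (Fin.last n)).1) _
              (measurable_pi_apply j)
          rw [this, ih j]
          rfl

lemma chain_edge
    (h1 : ∀ j, (γ j : Measure (A × B)).map Prod.fst = (ρ j : Measure (A × B)).map Prod.fst)
    (h2 : ∀ j, (γ j : Measure (A × B)).map Prod.snd = (ρ (j + 1) : Measure (A × B)).map Prod.snd)
    (n : ℕ) (j : ℕ) (hj : j < n) :
    (chain ρ γ n).map (fun ω => ((ω ⟨j, by omega⟩).1, (ω ⟨j + 1, by omega⟩).2))
      = (γ j : Measure (A × B)) := by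
  induction n with
  | zero => omega
  | succ n ih =>
      rw [chain]
      set Z := A × B with hZ
      have hmeas : ∀ (N : ℕ) (a b : Fin N),
          Measurable (fun ω : Fin N → Z => ((ω a).1, (ω b).2)) := fun N a b =>
        ((measurable_fst.comp (measurable_pi_apply a)).prodMk
          (measurable_snd.comp (measurable_pi_apply b)))
      rw [Measure.map_map (hmeas (n+2) ⟨j, by omega⟩ ⟨j+1, by omega⟩) measurable_snocFun]
      by_cases hjn : j < n
      · have hcomp : ((fun ω : Fin (n+2) → Z => ((ω ⟨j, by omega⟩).1, (ω ⟨j+1, by omega⟩).2)) ∘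
            fun q : (Fin (n+1) → Z) × Z => (Fin.snoc q.1 q.2 : Fin (n+2) → Z))
            = fun q : (Fin (n+1) → Z) × Z =>
                ((q.1 ⟨j, by omega⟩).1, (q.1 ⟨j+1, by omega⟩).2) := by
          funext q
          have e1 : (⟨j, by omega⟩ : Fin (n+2)) = Fin.castSucc ⟨j, by omega⟩ := rfl
          have e2 : (⟨j+1, by omega⟩ : Fin (n+2)) = Fin.castSucc ⟨j+1, by omega⟩ := rfl
          simp only [Function.comp_apply, e1, e2, Fin.snoc_castSucc]
        rw [hcomp]
        have := ext_map_fst (Q := chain ρ γ n)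
          (γ := (γ n : Measure Z)) (ρ' := (ρ (n+1) : Measure Z))
          (g := fun ω : Fin (n+1) → Z => (ω (Fin.last n)).1)
          (measurable_fst.comp (measurable_pi_apply (Fin.last n)))
          (hmeas (n+1) ⟨j, by omega⟩ ⟨j+1, by omega⟩)
        rw [this, ih hjn]
      · have hjeq : n = j := by omega
        subst hjeq
        have hcomp : ((fun ω : Fin (n+2) → Z => ((ω ⟨n, by omega⟩).1, (ω ⟨n+1, by omega⟩).2)) ∘
            fun q : (Fin (n+1) → Z) × Z => (Fin.snoc q.1 q.2 : Fin (n+2) → Z))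
            = fun q : (Fin (n+1) → Z) × Z => ((q.1 (Fin.last n)).1, q.2.2) := by
          funext q
          have e1 : (⟨n, by omega⟩ : Fin (n+2)) = Fin.castSucc (Fin.last n) := rfl
          have e2 : (⟨n+1, by omega⟩ : Fin (n+2)) = Fin.last (n+1) := rfl
          simp only [Function.comp_apply, e1, e2, Fin.snoc_castSucc, Fin.snoc_last]
        rw [hcomp]
        have hQg : (chain ρ γ n).map (fun ω => (ω (Fin.last n)).1)
            = (γ n : Measure Z).map Prod.fst := by
          have hl := chain_eval h1 h2 n (Fin.last n)
          rw [Fin.val_last] at hl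
          rw [h1 n, ← hl]
          exact (Measure.map_map measurable_fst (measurable_pi_apply (Fin.last n))).symm
        exact ext_edge (g := fun ω : Fin (n+1) → Z => (ω (Fin.last n)).1) _ hQg


end ChainAux

/-- Proposition 3.7, claim 2: if `F ⊆ P_{a1⊕a2}(X1 × X2)` is totally
`C`-cyclically monotone, then the set of its marginal pairs is `C`-cyclically monotone. -/
theorem totallyCCyclMono_marginals_cyclMono
    (c : X1 × X2 → ℝ≥0∞) (hc : LowerSemicontinuous c)
    (a1 : X1 → ℝ≥0∞) (a2 : X2 → ℝ≥0∞) (ha1 : Measurable a1) (ha2 : Measurable a2)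
    (hdom : ∀ x1 x2, c (x1, x2) ≤ a1 x1 + a2 x2)
    (F : Set (ProbabilityMeasure (X1 × X2))) (hF : F ⊆ PaPair a1 a2)
    (hmono : TotallyCCyclMono c F) :
    KCyclMono (OTCost c) ((fun π => (margFst π, margSnd π)) '' F) := by
  classical
  intro k hk f hf σ
  have hk0 : 0 < k := hk
  have hcm : Measurable c := hc.measurable
  choose π hπF hπeq using hf
  haveI hne : Nonempty (X1 × X2) := (π ⟨0, hk0⟩).nonempty
  haveI : Nonempty X1 := ⟨hne.some.1⟩
  haveI : Nonempty X2 := ⟨hne.some.2⟩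
  set μ1 : Fin k → ProbabilityMeasure X1 := fun i => margFst (π i) with hμ1def
  set μ2 : Fin k → ProbabilityMeasure X2 := fun i => margSnd (π i) with hμ2def
  have hπ1 : ∀ i, ((π i : Measure (X1 × X2))).map Prod.fst = (μ1 i : Measure X1) :=
    fun i => (ProbabilityMeasure.toMeasure_map (π i) measurable_fst.aemeasurable).symm
  have hπ2 : ∀ i, ((π i : Measure (X1 × X2))).map Prod.snd = (μ2 i : Measure X2) :=
    fun i => (ProbabilityMeasure.toMeasure_map (π i) measurable_snd.aemeasurable).symm
  set A1 : Fin k → ℝ≥0∞ := fun i => ∫⁻ x, a1 x ∂(μ1 i : Measure X1) with hA1def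
  set A2 : Fin k → ℝ≥0∞ := fun i => ∫⁻ x, a2 x ∂(μ2 i : Measure X2) with hA2def
  have hA1fin : ∀ i, A1 i ≠ ⊤ := fun i => (hF (hπF i)).1
  have hA2fin : ∀ i, A2 i ≠ ⊤ := fun i => (hF (hπF i)).2
  set S : ℝ≥0∞ := (∑ i, A1 i) + (∑ i, A2 i) with hSdef
  have hSfin : S ≠ ⊤ := by
    rw [hSdef]
    refine ENNReal.add_ne_top.mpr ⟨?_, ?_⟩
    · exact (ENNReal.sum_lt_top.mpr fun i _ => (hA1fin i).lt_top).ne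
    · exact (ENNReal.sum_lt_top.mpr fun i _ => (hA2fin i).lt_top).ne
  have hcost_le : ∀ (Q : Measure (X1 × X2)) (i j : Fin k),
      Q.map Prod.fst = (μ1 i : Measure X1) → Q.map Prod.snd = (μ2 j : Measure X2) →
      ∫⁻ p, c p ∂Q ≤ A1 i + A2 j := by
    intro Q i j h1 h2
    calc ∫⁻ p, c p ∂Q ≤ ∫⁻ p, (a1 p.1 + a2 p.2) ∂Q :=
          lintegral_mono fun p => hdom p.1 p.2
      _ = (∫⁻ p, a1 p.1 ∂Q) + ∫⁻ p, a2 p.2 ∂Q :=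
          lintegral_add_left (ha1.comp measurable_fst) _
      _ = A1 i + A2 j := by
          rw [hA1def, hA2def]
          simp only
          rw [← h1, ← h2, lintegral_map ha1 measurable_fst, lintegral_map ha2 measurable_snd]
  have hOTle : ∀ (i j : Fin k) (Q : ProbabilityMeasure (X1 × X2)),
      Q ∈ Coupling (μ1 i) (μ2 j) → OTCost c (μ1 i) (μ2 j) ≤ transportCost c Q :=
    fun i j Q hQ => iInf₂_le Q hQ
  have hπcoup : ∀ i, π i ∈ Coupling (μ1 i) (μ2 i) := fun i => ⟨hπ1 i, hπ2 i⟩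
  have hCfin : ∀ i j, OTCost c (μ1 i) (μ2 j) ≠ ⊤ := by
    intro i j
    haveI hp : IsProbabilityMeasure ((μ1 i : Measure X1).prod (μ2 j : Measure X2)) :=
      inferInstance
    set Qp : ProbabilityMeasure (X1 × X2) := ⟨(μ1 i : Measure X1).prod (μ2 j), hp⟩ with hQpdef
    have hmem : Qp ∈ Coupling (μ1 i) (μ2 j) := by
      have hfst : ((μ1 i : Measure X1).prod (μ2 j : Measure X2)).map Prod.fst
          = (μ1 i : Measure X1) := by
        rw [Measure.map_fst_prod]
        simp
      have hsnd : ((μ1 i : Measure X1).prod (μ2 j : Measure X2)).map Prod.snd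
          = (μ2 j : Measure X2) := by
        rw [Measure.map_snd_prod]
        simp
      exact ⟨hfst, hsnd⟩
    have h1 := hOTle i j Qp hmem
    have h2 : transportCost c Qp ≤ A1 i + A2 j := hcost_le _ i j hmem.1 hmem.2
    exact ne_top_of_le_ne_top (ENNReal.add_ne_top.mpr ⟨hA1fin i, hA2fin j⟩) (h1.trans h2)
  set Lc : ℝ≥0∞ := ∑ i, OTCost c (μ1 i) (μ2 i) with hLdef
  set Rc : ℝ≥0∞ := ∑ i, OTCost c (μ1 i) (μ2 (σ i)) with hRdef
  suffices hLR : Lc ≤ Rc by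
    have h1 : ∀ i, f i = (μ1 i, μ2 i) := fun i => (hπeq i).symm
    have e1 : ∑ i, OTCost c (f i).1 (f i).2 = Lc := by
      rw [hLdef]
      refine Finset.sum_congr rfl fun i _ => ?_
      rw [h1 i]
    have e2 : ∑ i, OTCost c (f i).1 (f (σ i)).2 = Rc := by
      rw [hRdef]
      refine Finset.sum_congr rfl fun i _ => ?_
      rw [h1 i, h1 (σ i)]
    rw [e1, e2]
    exact hLR
  -- main estimate for each number of copies m and each ε > 0
  have hmain : ∀ (m : ℕ), 0 < m → ∀ ε : ℝ≥0∞, 0 < ε →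
      (m : ℝ≥0∞) * Lc ≤ (m : ℝ≥0∞) * (Rc + (k : ℝ≥0∞) * ε) + (k : ℝ≥0∞) * S := by
    intro m hm0 ε hε
    -- near-optimal couplings
    have hex : ∀ i j : Fin k, ∃ Q : ProbabilityMeasure (X1 × X2),
        Q ∈ Coupling (μ1 i) (μ2 j) ∧ transportCost c Q ≤ OTCost c (μ1 i) (μ2 j) + ε := by
      intro i j
      have hlt : (⨅ (Q : ProbabilityMeasure (X1 × X2)) (_ : Q ∈ Coupling (μ1 i) (μ2 j)),
          transportCost c Q) < OTCost c (μ1 i) (μ2 j) + ε :=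
        ENNReal.lt_add_right (hCfin i j) hε.ne'
      rw [iInf_lt_iff] at hlt
      obtain ⟨Q, hQ⟩ := hlt
      rw [iInf_lt_iff] at hQ
      obtain ⟨hQmem, hQlt⟩ := hQ
      exact ⟨Q, hQmem, hQlt.le⟩
    choose β hβmem hβcost using hex
    set Nn := k * m - 1 with hNdef
    have hN : Nn + 1 = k * m := by
      have : 0 < k * m := Nat.mul_pos hk0 hm0
      omega
    set E := blockEquiv hk0 hm0 hN with hEdef
    set p : ℕ → Fin k := fun j => (σ ^ (j % m)) ⟨(j / m) % k, Nat.mod_lt _ hk0⟩ with hpdef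
    have hcongr : ∀ {t t' d d' : ℕ}, t = t' → d = d' →
        (σ ^ t) (⟨d % k, Nat.mod_lt _ hk0⟩ : Fin k) = (σ ^ t') ⟨d' % k, Nat.mod_lt _ hk0⟩ := by
      intro t t' d d' h1 h2
      subst h1
      subst h2
      rfl
    have hp_good : ∀ j : ℕ, j % m ≠ m - 1 → p (j + 1) = σ (p j) := by
      intro j hj
      obtain ⟨hmod, hdiv⟩ := mod_div_succ hm0 hj
      simp only [hpdef]
      rw [hcongr hmod hdiv, pow_succ']
      rfl
    have hx : ∀ q : Fin m × Fin k,
        ((E.symm q : Fin (Nn + 1)) : ℕ) = q.2.1 * m + q.1.1 :=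
      fun q => blockEquiv_symm_val hk0 hm0 hN q
    have hEmod : ∀ q : Fin m × Fin k, ((E.symm q : Fin (Nn + 1)) : ℕ) % m = (q.1 : ℕ) := by
      intro q
      rw [hx q, Nat.mul_comm, Nat.mul_add_mod]
      exact Nat.mod_eq_of_lt q.1.2
    have hEdiv : ∀ q : Fin m × Fin k, ((E.symm q : Fin (Nn + 1)) : ℕ) / m = (q.2 : ℕ) := by
      intro q
      rw [hx q, Nat.mul_comm, Nat.mul_add_div hm0, Nat.div_eq_of_lt q.1.2]
      simp
    have hp_eq : ∀ q : Fin m × Fin k,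
        p ((E.symm q : Fin (Nn + 1)) : ℕ) = (σ ^ (q.1 : ℕ)) q.2 := by
      intro q
      simp only [hpdef]
      rw [hcongr (hEmod q) (hEdiv q)]
      refine congrArg _ (Fin.ext ?_)
      simp only
      exact Nat.mod_eq_of_lt q.2.2
    -- generic reindexing identity
    have hsum : ∀ g : Fin k → ℝ≥0∞,
        (∑ n : Fin (Nn + 1), g (p (n : ℕ))) = (m : ℝ≥0∞) * ∑ i, g i := by
      intro g
      have e1 : (∑ n : Fin (Nn + 1), g (p (n : ℕ)))
          = ∑ q : Fin m × Fin k, g (p ((E.symm q : Fin (Nn + 1)) : ℕ)) :=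
        (Equiv.sum_comp E.symm (fun n : Fin (Nn + 1) => g (p (n : ℕ)))).symm
      have e2 : (∑ q : Fin m × Fin k, g (p ((E.symm q : Fin (Nn + 1)) : ℕ)))
          = ∑ q : Fin m × Fin k, g ((σ ^ (q.1 : ℕ)) q.2) :=
        Finset.sum_congr rfl fun q _ => by rw [hp_eq q]
      have e3 : (∑ q : Fin m × Fin k, g ((σ ^ (q.1 : ℕ)) q.2))
          = ∑ t : Fin m, ∑ i : Fin k, g i := by
        rw [Fintype.sum_prod_type]
        exact Finset.sum_congr rfl fun t _ => Equiv.sum_comp (σ ^ (t : ℕ)) g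
      rw [e1, e2, e3, Finset.sum_const, Finset.card_univ, Fintype.card_fin, nsmul_eq_mul]
    -- chain data
    set ρc : ℕ → ProbabilityMeasure (X1 × X2) := fun j => π (p j) with hρdef
    set γc : ℕ → ProbabilityMeasure (X1 × X2) := fun j => β (p j) (p (j + 1)) with hγdef
    have h1c : ∀ j, (γc j : Measure (X1 × X2)).map Prod.fst
        = (ρc j : Measure (X1 × X2)).map Prod.fst := by
      intro j
      simp only [hγdef, hρdef]
      rw [(hβmem (p j) (p (j + 1))).1, hπ1 (p j)]
    have h2c : ∀ j, (γc j : Measure (X1 × X2)).map Prod.snd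
        = (ρc (j + 1) : Measure (X1 × X2)).map Prod.snd := by
      intro j
      simp only [hγdef, hρdef]
      rw [(hβmem (p j) (p (j + 1))).2, hπ2 (p (j + 1))]
    set θm : Measure (Fin (Nn + 1) → X1 × X2) := chain ρc γc Nn with hθdef
    haveI hθprob : IsProbabilityMeasure θm := chain_prob ρc γc Nn
    set θ : ProbabilityMeasure (Fin (Nn + 1) → X1 × X2) := ⟨θm, hθprob⟩ with hθPdef
    have hcoord : ∀ n : Fin (Nn + 1),
        θm.map (fun ω => ω n) = (ρc (n : ℕ) : Measure (X1 × X2)) :=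
      fun n => chain_eval h1c h2c Nn n
    have hθmem : ∀ n : Fin (Nn + 1), θ.map (measurable_pi_apply n).aemeasurable ∈ F := by
      intro n
      have he : θ.map (measurable_pi_apply n).aemeasurable = π (p (n : ℕ)) := by
        apply ProbabilityMeasure.toMeasure_injective
        rw [ProbabilityMeasure.toMeasure_map]
        exact hcoord n
      rw [he]
      exact hπF _
    set σ' := blockPerm hk0 hm0 hN with hσ'def
    have hkey := hmono (Nn + 1) (by omega) θ hθmem σ'
    -- LHS
    have hLHS : (m : ℝ≥0∞) * Lc ≤ ∫⁻ ω, ∑ n, c (ω n) ∂θm := by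
      rw [lintegral_finset_sum (f := fun n (ω : Fin (Nn + 1) → X1 × X2) => c (ω n))
        Finset.univ
        (fun n _ => (hcm.comp (measurable_pi_apply n) :
          Measurable fun ω : Fin (Nn + 1) → X1 × X2 => c (ω n)))]
      have hterm : ∀ n : Fin (Nn + 1),
          OTCost c (μ1 (p (n : ℕ))) (μ2 (p (n : ℕ))) ≤ ∫⁻ ω, c (ω n) ∂θm := by
        intro n
        have he : ∫⁻ ω, c (ω n) ∂θm = ∫⁻ z, c z ∂(ρc (n : ℕ) : Measure (X1 × X2)) := by
          rw [← hcoord n, lintegral_map hcm (measurable_pi_apply n)]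
        rw [he]
        exact hOTle _ _ _ (hπcoup (p (n : ℕ)))
      calc (m : ℝ≥0∞) * Lc
          = ∑ n : Fin (Nn + 1), OTCost c (μ1 (p (n : ℕ))) (μ2 (p (n : ℕ))) :=
            (hsum fun i => OTCost c (μ1 i) (μ2 i)).symm
        _ ≤ ∑ n : Fin (Nn + 1), ∫⁻ ω, c (ω n) ∂θm := Finset.sum_le_sum fun n _ => hterm n
    -- RHS
    have hRHS : (∫⁻ ω, ∑ n, c ((ω n).1, (ω (σ' n)).2) ∂θm)
        ≤ (m : ℝ≥0∞) * (Rc + (k : ℝ≥0∞) * ε) + (k : ℝ≥0∞) * S := by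
      have hgn : ∀ n : Fin (Nn + 1),
          Measurable (fun ω : Fin (Nn + 1) → X1 × X2 => ((ω n).1, (ω (σ' n)).2)) :=
        fun n => (measurable_fst.comp (measurable_pi_apply n)).prodMk
          (measurable_snd.comp (measurable_pi_apply (σ' n)))
      rw [lintegral_finset_sum
        (f := fun n (ω : Fin (Nn + 1) → X1 × X2) => c ((ω n).1, (ω (σ' n)).2))
        Finset.univ
        (fun n _ => (hcm.comp (hgn n) :
          Measurable fun ω : Fin (Nn + 1) → X1 × X2 => c ((ω n).1, (ω (σ' n)).2)))]
      have hterm : ∀ n : Fin (Nn + 1), (∫⁻ ω, c ((ω n).1, (ω (σ' n)).2) ∂θm)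
          ≤ if (n : ℕ) % m = m - 1 then S
            else OTCost c (μ1 (p (n : ℕ))) (μ2 (σ (p (n : ℕ)))) + ε := by
        intro n
        by_cases hb : (n : ℕ) % m = m - 1
        · rw [if_pos hb]
          set Q : Measure (X1 × X2) := θm.map (fun ω => ((ω n).1, (ω (σ' n)).2)) with hQdef
          have hint : (∫⁻ ω, c ((ω n).1, (ω (σ' n)).2) ∂θm) = ∫⁻ z, c z ∂Q :=
            (lintegral_map hcm (hgn n)).symm
          have hQ1 : Q.map Prod.fst = (μ1 (p (n : ℕ)) : Measure X1) := by
            have e0 : Q.map Prod.fst = θm.map (fun ω => (ω n).1) :=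
              Measure.map_map measurable_fst (hgn n)
            have e1 : θm.map (fun ω : Fin (Nn + 1) → X1 × X2 => (ω n).1)
                = (θm.map (fun ω => ω n)).map Prod.fst :=
              (Measure.map_map measurable_fst (measurable_pi_apply n)).symm
            rw [e0, e1, hcoord n]
            simp only [hρdef]
            exact hπ1 _
          have hQ2 : Q.map Prod.snd = (μ2 (p ((σ' n : Fin (Nn + 1)) : ℕ)) : Measure X2) := by
            have e0 : Q.map Prod.snd = θm.map (fun ω => (ω (σ' n)).2) :=
              Measure.map_map measurable_snd (hgn n)
            have e1 : θm.map (fun ω : Fin (Nn + 1) → X1 × X2 => (ω (σ' n)).2)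
                = (θm.map (fun ω => ω (σ' n))).map Prod.snd :=
              (Measure.map_map measurable_snd (measurable_pi_apply (σ' n))).symm
            rw [e0, e1, hcoord (σ' n)]
            simp only [hρdef]
            exact hπ2 _
          rw [hint]
          refine le_trans (hcost_le Q _ _ hQ1 hQ2) ?_
          rw [hSdef]
          exact add_le_add
            (Finset.single_le_sum (fun i _ => (zero_le : 0 ≤ A1 i)) (Finset.mem_univ _))
            (Finset.single_le_sum (fun i _ => (zero_le : 0 ≤ A2 i)) (Finset.mem_univ _))
        · rw [if_neg hb]
          have hσn : σ' n = ⟨(n : ℕ) + 1, good_lt hk0 hm0 hN n hb⟩ :=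
            blockPerm_good hk0 hm0 hN n hb
          have hNmod : Nn % m = m - 1 := by
            obtain ⟨k', hk'⟩ : ∃ k', k = k' + 1 := ⟨k - 1, by omega⟩
            have hmul : (k' + 1) * m = k' * m + m := by ring
            have hNn : Nn = k' * m + (m - 1) := by
              rw [hk'] at hN
              omega
            rw [hNn, Nat.mul_comm, Nat.mul_add_mod]
            exact Nat.mod_eq_of_lt (by omega)
          have hlt : (n : ℕ) < Nn := by
            have h2 := n.2
            rcases Nat.lt_or_ge (n : ℕ) Nn with h | h
            · exact h
            · exfalso
              have : (n : ℕ) = Nn := by omega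
              rw [this, hNmod] at hb
              exact hb rfl
          have hedge := chain_edge h1c h2c Nn (n : ℕ) hlt
          have hmapeq : θm.map (fun ω => ((ω n).1, (ω (σ' n)).2)) = (γc (n : ℕ) :
              Measure (X1 × X2)) := by
            rw [← hedge]
            congr 1
            funext ω
            rw [hσn]
          have hint : (∫⁻ ω, c ((ω n).1, (ω (σ' n)).2) ∂θm)
              = ∫⁻ z, c z ∂(γc (n : ℕ) : Measure (X1 × X2)) := by
            rw [← hmapeq, lintegral_map hcm (hgn n)]
          rw [hint]
          have hc1 : (∫⁻ z, c z ∂(γc (n : ℕ) : Measure (X1 × X2)))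
              ≤ OTCost c (μ1 (p (n : ℕ))) (μ2 (p ((n : ℕ) + 1))) + ε :=
            hβcost (p (n : ℕ)) (p ((n : ℕ) + 1))
          rw [hp_good (n : ℕ) hb] at hc1
          exact hc1
      calc (∑ n : Fin (Nn + 1), ∫⁻ ω, c ((ω n).1, (ω (σ' n)).2) ∂θm)
          ≤ ∑ n : Fin (Nn + 1), (if (n : ℕ) % m = m - 1 then S
              else OTCost c (μ1 (p (n : ℕ))) (μ2 (σ (p (n : ℕ)))) + ε) :=
            Finset.sum_le_sum fun n _ => hterm n
        _ = ∑ q : Fin m × Fin k, (if (q.1 : ℕ) = m - 1 then S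
              else OTCost c (μ1 ((σ ^ (q.1 : ℕ)) q.2)) (μ2 (σ ((σ ^ (q.1 : ℕ)) q.2))) + ε) :=
            (Equiv.sum_comp E.symm (fun n : Fin (Nn + 1) =>
              if (n : ℕ) % m = m - 1 then S
              else OTCost c (μ1 (p (n : ℕ))) (μ2 (σ (p (n : ℕ)))) + ε)).symm.trans
            (Finset.sum_congr rfl fun q _ => by simp only [hEmod q, hp_eq q])
        _ = ∑ t : Fin m, ∑ i : Fin k, (if (t : ℕ) = m - 1 then S
              else OTCost c (μ1 ((σ ^ (t : ℕ)) i)) (μ2 (σ ((σ ^ (t : ℕ)) i))) + ε) :=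
            Fintype.sum_prod_type _
        _ ≤ (m : ℝ≥0∞) * (Rc + (k : ℝ≥0∞) * ε) + (k : ℝ≥0∞) * S := by
            have hin : ∀ t : Fin m, (∑ i : Fin k, if (t : ℕ) = m - 1 then S
                else OTCost c (μ1 ((σ ^ (t : ℕ)) i)) (μ2 (σ ((σ ^ (t : ℕ)) i))) + ε)
                ≤ (Rc + (k : ℝ≥0∞) * ε) + (if (t : ℕ) = m - 1 then (k : ℝ≥0∞) * S else 0) := by
              intro t
              by_cases ht : (t : ℕ) = m - 1
              · simp only [if_pos ht]
                rw [Finset.sum_const, Finset.card_univ, Fintype.card_fin, nsmul_eq_mul]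
                exact le_add_self
              · simp only [if_neg ht]
                rw [add_zero, Finset.sum_add_distrib, Finset.sum_const, Finset.card_univ,
                  Fintype.card_fin, nsmul_eq_mul]
                have hRc : (∑ i : Fin k, OTCost c (μ1 ((σ ^ (t : ℕ)) i))
                    (μ2 (σ ((σ ^ (t : ℕ)) i)))) = Rc :=
                  Equiv.sum_comp (σ ^ (t : ℕ)) (fun i => OTCost c (μ1 i) (μ2 (σ i)))
                rw [hRc]
            calc (∑ t : Fin m, ∑ i : Fin k, if (t : ℕ) = m - 1 then S
                  else OTCost c (μ1 ((σ ^ (t : ℕ)) i)) (μ2 (σ ((σ ^ (t : ℕ)) i))) + ε)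
                ≤ ∑ t : Fin m, ((Rc + (k : ℝ≥0∞) * ε)
                    + (if (t : ℕ) = m - 1 then (k : ℝ≥0∞) * S else 0)) :=
                  Finset.sum_le_sum fun t _ => hin t
              _ = (m : ℝ≥0∞) * (Rc + (k : ℝ≥0∞) * ε) + (k : ℝ≥0∞) * S := by
                  rw [Finset.sum_add_distrib, Finset.sum_const, Finset.card_univ,
                    Fintype.card_fin, nsmul_eq_mul]
                  congr 1
                  have hiff : ∀ t : Fin m, ((t : ℕ) = m - 1) ↔ (t = ⟨m - 1, by omega⟩) := by
                    intro t
                    constructor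
                    · intro h
                      exact Fin.ext h
                    · intro h
                      rw [h]
                  simp_rw [if_congr (hiff _) rfl rfl]
                  rw [Finset.sum_ite_eq' Finset.univ (⟨m - 1, by omega⟩ : Fin m)
                    (fun _ => (k : ℝ≥0∞) * S)]
                  simp
    exact le_trans hLHS (le_trans hkey hRHS)
  -- limit argument
  have hRfin : Rc ≠ ⊤ := by
    rw [hRdef]
    exact (ENNReal.sum_lt_top.mpr fun i _ => (hCfin i (σ i)).lt_top).ne
  set D : ℝ≥0∞ := (k : ℝ≥0∞) + (k : ℝ≥0∞) * S with hDdef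
  have hDfin : D ≠ ⊤ := by
    rw [hDdef]
    exact ENNReal.add_ne_top.mpr ⟨ENNReal.natCast_ne_top k,
      ENNReal.mul_ne_top (ENNReal.natCast_ne_top k) hSfin⟩
  have hstep : ∀ m : ℕ, 0 < m → (m : ℝ≥0∞) * Lc ≤ (m : ℝ≥0∞) * Rc + D := by
    intro m hm
    have hmne : (m : ℝ≥0∞) ≠ 0 := by exact_mod_cast hm.ne'
    have hminv : (0 : ℝ≥0∞) < (m : ℝ≥0∞)⁻¹ :=
      ENNReal.inv_pos.mpr (ENNReal.natCast_ne_top m)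
    have h := hmain m hm ((m : ℝ≥0∞)⁻¹) hminv
    have hmul : (m : ℝ≥0∞) * ((k : ℝ≥0∞) * (m : ℝ≥0∞)⁻¹) = (k : ℝ≥0∞) := by
      rw [mul_comm (k : ℝ≥0∞) _, ← mul_assoc,
        ENNReal.mul_inv_cancel hmne (ENNReal.natCast_ne_top m), one_mul]
    calc (m : ℝ≥0∞) * Lc
        ≤ (m : ℝ≥0∞) * (Rc + (k : ℝ≥0∞) * (m : ℝ≥0∞)⁻¹) + (k : ℝ≥0∞) * S := h
      _ = ((m : ℝ≥0∞) * Rc + (k : ℝ≥0∞)) + (k : ℝ≥0∞) * S := by rw [mul_add, hmul]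
      _ = (m : ℝ≥0∞) * Rc + D := by rw [hDdef, add_assoc]
  refine ENNReal.le_of_forall_pos_le_add ?_
  intro ε' hε' hRtop
  have hδ : ((ε' : ℝ≥0∞)) ≠ 0 := by exact_mod_cast hε'.ne'
  obtain ⟨m, hm⟩ := ENNReal.exists_nat_gt ((ENNReal.div_lt_top hDfin hδ).ne)
  have hm0 : 0 < m := by
    rcases Nat.eq_zero_or_pos m with rfl | h
    · exfalso
      simp at hm
    · exact h
  have hDm : D < (m : ℝ≥0∞) * (ε' : ℝ≥0∞) := by
    rw [ENNReal.div_lt_iff (Or.inl hδ) (Or.inr hDfin)] at hm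
    exact hm
  have h := hstep m hm0
  have hfin : (m : ℝ≥0∞) * Lc ≤ (m : ℝ≥0∞) * (Rc + (ε' : ℝ≥0∞)) := by
    calc (m : ℝ≥0∞) * Lc ≤ (m : ℝ≥0∞) * Rc + D := h
      _ ≤ (m : ℝ≥0∞) * Rc + (m : ℝ≥0∞) * (ε' : ℝ≥0∞) := add_le_add_right hDm.le _
      _ = (m : ℝ≥0∞) * (Rc + (ε' : ℝ≥0∞)) := (mul_add _ _ _).symm
  exact (ENNReal.mul_le_mul_iff_right (by exact_mod_cast hm0.ne') (ENNReal.natCast_ne_top m)).mp hfin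

end OTRM
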